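/- Let A, B, P be n×n real symmetric positive-definite matrices, let S = Log_B(P) = B^{1/2} log(B^{-1/2} P B^{-1/2}) B^{1/2}, and let E = B^{1/2}(B^{-1/2} A B^{-1/2})^{1/2} B^{-1/2}. Then Exp_A(E S E^T) = E P E^T, where Exp_A(S) = A^{1/2} exp(A^{-1/2} S A^{-1/2}) A^{1/2}. -/

import Mathlib

open Matrix

/-- With `S = Log_B(P) = B^{1/2} log(B^{-1/2} P B^{-1/2}) B^{1/2}` and
`E = B^{1/2}(B^{-1/2} A B^{-1/2})^{1/2} B^{-1/2}`, one has `Exp_A(E S Eᵀ) = E P Eᵀ`,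
where `Exp_A(S) = A^{1/2} exp(A^{-1/2} S A^{-1/2}) A^{1/2}`. -/
theorem stmt_10 (n : ℕ) (A B P sA sB sC Lp : Matrix (Fin n) (Fin n) ℝ)
    (hA : A.PosDef) (hB : B.PosDef) (hP : P.PosDef)
    (hsA : sA.PosDef) (hsA2 : sA * sA = A)
    (hsB : sB.PosDef) (hsB2 : sB * sB = B)
    (hsC : sC.PosDef) (hsC2 : sC * sC = sB⁻¹ * A * sB⁻¹)
    (hLp : Lp.IsSymm) (hexpP : NormedSpace.exp Lp = sB⁻¹ * P * sB⁻¹) :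
    sA * NormedSpace.exp
        (sA⁻¹ * ((sB * sC * sB⁻¹) * (sB * Lp * sB) * (sB * sC * sB⁻¹)ᵀ) * sA⁻¹) * sA =
      (sB * sC * sB⁻¹) * P * (sB * sC * sB⁻¹)ᵀ := by
  have hsAu : IsUnit sA := (Matrix.isUnit_iff_isUnit_det _).2 (isUnit_iff_ne_zero.2 hsA.det_pos.ne')
  have hsBu : IsUnit sB := (Matrix.isUnit_iff_isUnit_det _).2 (isUnit_iff_ne_zero.2 hsB.det_pos.ne')
  have hsAinv : sA⁻¹ * sA = 1 := Matrix.nonsing_inv_mul _ (isUnit_iff_ne_zero.2 hsA.det_pos.ne')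
  have hsAinv' : sA * sA⁻¹ = 1 := Matrix.mul_nonsing_inv _ (isUnit_iff_ne_zero.2 hsA.det_pos.ne')
  have hsBinv : sB⁻¹ * sB = 1 := Matrix.nonsing_inv_mul _ (isUnit_iff_ne_zero.2 hsB.det_pos.ne')
  have hsBinv' : sB * sB⁻¹ = 1 := Matrix.mul_nonsing_inv _ (isUnit_iff_ne_zero.2 hsB.det_pos.ne')
  have hsAt : sAᵀ = sA := hsA.1
  have hsBt : sBᵀ = sB := hsB.1
  have hsCt : sCᵀ = sC := hsC.1
  have hBinvt : (sB⁻¹)ᵀ = sB⁻¹ := by rw [Matrix.transpose_nonsing_inv, hsBt]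
  -- E transpose
  have hEt : (sB * sC * sB⁻¹)ᵀ = sB⁻¹ * sC * sB := by
    simp [Matrix.transpose_mul, hsBt, hsCt, hBinvt, Matrix.mul_assoc]
  -- key: (sB*sC) * (sB*sC)ᵀ-like product equals A
  have hM : sB * sC * sC * sB = A := by
    have := hsC2
    calc sB * sC * sC * sB = sB * (sC * sC) * sB := by noncomm_ring
    _ = sB * (sB⁻¹ * A * sB⁻¹) * sB := by rw [hsC2]
    _ = (sB * sB⁻¹) * A * (sB⁻¹ * sB) := by noncomm_ring
    _ = A := by rw [hsBinv, hsBinv']; noncomm_ring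
  -- set U := sA⁻¹ * sB * sC, then U⁻¹ = sC⁻¹ * sB⁻¹ * sA... instead use conj directly
  have hmul : sA⁻¹ * (sB * sC) * (sC * sB * sA⁻¹) = 1 := by
    calc sA⁻¹ * (sB * sC) * (sC * sB * sA⁻¹)
        = sA⁻¹ * (sB * sC * sC * sB) * sA⁻¹ := by noncomm_ring
      _ = sA⁻¹ * (sA * sA) * sA⁻¹ := by rw [hM, hsA2]
      _ = (sA⁻¹ * sA) * (sA * sA⁻¹) := by noncomm_ring
      _ = 1 := by rw [hsAinv, hsAinv']; noncomm_ring
  have hU : IsUnit (sA⁻¹ * (sB * sC)) := by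
    rw [Matrix.isUnit_iff_isUnit_det]
    have : (sA⁻¹ * (sB * sC)).det * (sC * sB * sA⁻¹).det = 1 := by
      rw [← Matrix.det_mul, hmul, Matrix.det_one]
    exact IsUnit.of_mul_eq_one _ this
  have hUinv : (sA⁻¹ * (sB * sC))⁻¹ = sC * sB * sA⁻¹ := Matrix.inv_eq_right_inv hmul
  have harg : sA⁻¹ * ((sB * sC * sB⁻¹) * (sB * Lp * sB) * (sB * sC * sB⁻¹)ᵀ) * sA⁻¹
      = (sA⁻¹ * (sB * sC)) * Lp * (sA⁻¹ * (sB * sC))⁻¹ := by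
    rw [hEt, hUinv]
    calc sA⁻¹ * (sB * sC * sB⁻¹ * (sB * Lp * sB) * (sB⁻¹ * sC * sB)) * sA⁻¹
        = sA⁻¹ * (sB * sC * (sB⁻¹ * sB) * Lp * (sB * sB⁻¹) * sC * sB) * sA⁻¹ := by noncomm_ring
      _ = _ := by rw [hsBinv, hsBinv']; noncomm_ring
  have hconj := Matrix.exp_conj (sA⁻¹ * (sB * sC)) Lp hU
  rw [harg, hconj, hUinv, hexpP, hEt]
  calc sA * (sA⁻¹ * (sB * sC) * (sB⁻¹ * P * sB⁻¹) * (sC * sB * sA⁻¹)) * sA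
      = (sA * sA⁻¹) * (sB * sC * sB⁻¹ * P * sB⁻¹ * sC * sB) * (sA⁻¹ * sA) := by noncomm_ring
    _ = sB * sC * sB⁻¹ * P * (sB⁻¹ * sC * sB) := by rw [hsAinv, hsAinv']; noncomm_ring
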